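/- Fix m ≥ 3 and let μ ∈ Opt(m). For any edge e ∈ supp μ, μ(e) ≤ 1/m, with equality if and only if e belongs to every unlabeled m-cycle of the support graph G_μ. -/

import Mathlib

open Finset

/-- The cyclic successor of an index in `Fin m`. -/
def cnext {m : ℕ} (i : Fin m) : Fin m := ⟨(i.1 + 1) % m, Nat.mod_lt _ i.pos⟩

/-- `μ` is a probability mass on the 2-element subsets of `X`: it is nonnegative,
vanishes on the diagonal, and has total mass 1. -/
def IsProbMass {X : Type*} [Fintype X] [DecidableEq X] (μ : Sym2 X → ℝ) : Prop :=
  (∀ e, 0 ≤ μ e) ∧ (∀ e : Sym2 X, e.IsDiag → μ e = 0) ∧ (∑ e : Sym2 X, μ e) = 1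

/-- The weight `μ(C)` of the labeled cycle `f 0, f 1, ..., f (m-1), f 0`. -/
def cycleWeight {X : Type*} (μ : Sym2 X → ℝ) {m : ℕ} (f : Fin m → X) : ℝ :=
  ∏ i : Fin m, μ s(f i, f (cnext i))

/-- `β(μ; m)`: the sum of `μ(C)` over all unlabeled `m`-cycles `C` in the complete
graph on `X`, computed as the sum over labeled cycles divided by `2m` (each unlabeled
`m`-cycle has exactly `2m` labelings). -/
noncomputable def beta {X : Type*} [Fintype X] [DecidableEq X] (μ : Sym2 X → ℝ) (m : ℕ) : ℝ :=
  (∑ f : Fin m → X, if Function.Injective f then cycleWeight μ f else 0) / (2 * m)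

/-- `β(m)`: the supremum of `β(μ; m)` over all probability masses `μ` on the
2-element subsets of a finite set (every finite set being a copy of some `Fin n`). -/
noncomputable def betaSup (m : ℕ) : ℝ :=
  sSup {b : ℝ | ∃ (n : ℕ) (μ : Sym2 (Fin n) → ℝ), IsProbMass μ ∧ b = beta μ m}

/-- The weighted degree `μ̄(x) = ∑_{y ≠ x} μ(xy)`. -/
noncomputable def wdeg {X : Type*} [Fintype X] [DecidableEq X] (μ : Sym2 X → ℝ) (x : X) : ℝ :=
  ∑ y ∈ Finset.univ.filter (· ≠ x), μ s(x, y)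

/-- The support graph `G_μ`, whose edges are the pairs of positive mass. -/
def supportGraph {X : Type*} (μ : Sym2 X → ℝ) : SimpleGraph X where
  Adj x y := x ≠ y ∧ 0 < μ s(x, y)
  symm := ⟨fun x y h => ⟨h.1.symm, by rw [Sym2.eq_swap]; exact h.2⟩⟩
  loopless := ⟨fun x h => h.1 rfl⟩

/-! ### Auxiliary definitions and lemmas -/

/-- The sum of cycle weights over all injective labelings. -/
noncomputable def cycSum {X : Type*} [Fintype X] [DecidableEq X] (μ : Sym2 X → ℝ) (m : ℕ) : ℝ :=
  ∑ f : Fin m → X, if Function.Injective f then cycleWeight μ f else 0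

section AuxA
variable {m : ℕ}

lemma mod_add_ne {a b : ℕ} (hm : 3 ≤ m) (h1 : 0 < a) (h2 : a < 3) :
    (b + a) % m ≠ b := by
  intro h
  have hd := Nat.div_add_mod (b + a) m
  rcases Nat.eq_zero_or_pos ((b + a) / m) with h0 | h0
  · rw [h0, Nat.mul_zero] at hd; omega
  · have : m ≤ m * ((b + a) / m) := Nat.le_mul_of_pos_right m h0
    omega

lemma cnext_ne (hm : 3 ≤ m) (i : Fin m) : cnext i ≠ i := by
  intro h
  exact mod_add_ne hm one_pos (by norm_num) (congrArg Fin.val h)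

lemma cnext_cnext_ne (hm : 3 ≤ m) (i : Fin m) : cnext (cnext i) ≠ i := by
  intro h
  have hv : ((i.1 + 1) % m + 1) % m = i.1 := congrArg Fin.val h
  rw [Nat.mod_add_mod] at hv
  exact mod_add_ne (a := 2) hm (by norm_num) (by norm_num) hv

lemma edges_distinct (hm : 3 ≤ m) {X : Type*} {f : Fin m → X} (hf : Function.Injective f)
    {i j : Fin m} (hij : i ≠ j) : s(f i, f (cnext i)) ≠ s(f j, f (cnext j)) := by
  intro h
  rw [Sym2.eq_iff] at h
  rcases h with ⟨h1, _⟩ | ⟨h1, h2⟩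
  · exact hij (hf h1)
  · have e1 : i = cnext j := hf h1
    have e2 : cnext i = j := hf h2
    exact cnext_cnext_ne hm j (by rw [← e1]; exact e2)

end AuxA

section AuxB
variable {m : ℕ} {X : Type*} [Fintype X] [DecidableEq X]

lemma beta_eq_cycSum (μ : Sym2 X → ℝ) : beta μ m = cycSum μ m / (2 * m) := rfl

omit [Fintype X] [DecidableEq X] in
lemma cycleWeight_nonneg {μ : Sym2 X → ℝ} (hμ : ∀ e, 0 ≤ μ e) (f : Fin m → X) :
    0 ≤ cycleWeight μ f :=
  Finset.prod_nonneg fun _ _ => hμ _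

lemma cycSum_nonneg {μ : Sym2 X → ℝ} (hμ : ∀ e, 0 ≤ μ e) : 0 ≤ cycSum μ m :=
  Finset.sum_nonneg fun f _ => by
    by_cases h : Function.Injective f <;> simp [h, cycleWeight_nonneg hμ]

lemma sum_pairs_le {μ : Sym2 X → ℝ} (hμ : IsProbMass μ) :
    ∑ p : X × X, μ s(p.1, p.2) ≤ 2 := by
  obtain ⟨hnn, hdiag, hsum⟩ := hμ
  have h1 : ∑ p : X × X, μ s(p.1, p.2)
      = ∑ e ∈ univ.image (fun p : X × X => s(p.1, p.2)),
          #{p : X × X | s(p.1, p.2) = e} • μ e :=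
    Finset.sum_comp μ (fun p : X × X => s(p.1, p.2))
  rw [h1]
  have h2 : ∀ e ∈ univ.image (fun p : X × X => s(p.1, p.2)),
      #{p : X × X | s(p.1, p.2) = e} • μ e ≤ 2 * μ e := by
    intro e he
    obtain ⟨p, -, hp⟩ := Finset.mem_image.1 he
    have hcard : #{q : X × X | s(q.1, q.2) = e} ≤ 2 := by
      subst hp
      have hsub : ({q : X × X | s(q.1, q.2) = s(p.1, p.2)} : Finset (X × X))
          ⊆ {(p.1, p.2), (p.2, p.1)} := by
        intro q hq
        have hq' : s(q.1, q.2) = s(p.1, p.2) := by simpa using hq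
        rw [Sym2.eq_iff] at hq'
        rcases hq' with ⟨h1, h2⟩ | ⟨h1, h2⟩ <;> simp [Finset.mem_insert, Prod.ext_iff, h1, h2]
      calc #{q : X × X | s(q.1, q.2) = s(p.1, p.2)} ≤ _ := Finset.card_le_card hsub
        _ ≤ 2 := Finset.card_insert_le _ _ |>.trans (by simp)
    rw [nsmul_eq_mul]
    exact mul_le_mul_of_nonneg_right (by exact_mod_cast hcard) (hnn e)
  calc _ ≤ ∑ e ∈ univ.image (fun p : X × X => s(p.1, p.2)), 2 * μ e :=
        Finset.sum_le_sum h2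
    _ ≤ ∑ e : Sym2 X, 2 * μ e := Finset.sum_le_sum_of_subset_of_nonneg (Finset.subset_univ _)
        (fun e _ _ => mul_nonneg zero_le_two (hnn e))
    _ = 2 := by rw [← Finset.mul_sum, hsum, mul_one]

lemma cycSum_le {μ : Sym2 X → ℝ} (hμ : IsProbMass μ) :
    cycSum μ m ≤ 2 ^ m := by
  have hnn := hμ.1
  have step1 : cycSum μ m ≤ ∑ f : Fin m → X, cycleWeight μ f := by
    apply Finset.sum_le_sum
    intro f _
    by_cases h : Function.Injective f <;> simp [h, cycleWeight_nonneg hnn]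
  have φinj : Function.Injective (fun f : Fin m → X => fun i => (f i, f (cnext i))) := by
    intro f g h
    funext i
    exact congrArg Prod.fst (congrFun h i)
  have step2 : ∑ f : Fin m → X, cycleWeight μ f
      ≤ ∑ g : Fin m → X × X, ∏ i, μ s((g i).1, (g i).2) := by
    have := Finset.sum_image (f := fun g : Fin m → X × X => ∏ i, μ s((g i).1, (g i).2))
      (g := fun f : Fin m → X => fun i => (f i, f (cnext i))) (s := univ)
      (fun f _ g _ h => φinj h)
    calc ∑ f : Fin m → X, cycleWeight μ f
        = ∑ g ∈ image (fun f : Fin m → X => fun i => (f i, f (cnext i))) univ,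
            ∏ i, μ s((g i).1, (g i).2) := this.symm
      _ ≤ _ := Finset.sum_le_sum_of_subset_of_nonneg (Finset.subset_univ _)
          (fun g _ _ => Finset.prod_nonneg fun _ _ => hnn _)
  have step3 : ∑ g : Fin m → X × X, ∏ i, μ s((g i).1, (g i).2)
      = (∑ p : X × X, μ s(p.1, p.2)) ^ m :=
    (Fintype.sum_pow (fun p : X × X => μ s(p.1, p.2)) m).symm
  have step4 : (∑ p : X × X, μ s(p.1, p.2)) ^ m ≤ 2 ^ m :=
    pow_le_pow_left₀ (Finset.sum_nonneg fun p _ => hnn _) (sum_pairs_le hμ) m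
  linarith

lemma isProbMass_transport {n : ℕ} (σ : X ≃ Fin n) (μ : Sym2 X → ℝ) (hμ : IsProbMass μ) :
    IsProbMass (fun e => μ (Sym2.map σ.symm e)) := by
  obtain ⟨hnn, hdiag, hsum⟩ := hμ
  have hbij : Function.Bijective (Sym2.map ⇑σ.symm : Sym2 (Fin n) → Sym2 X) := by
    constructor
    · exact Sym2.map.injective σ.symm.injective
    · intro e
      refine ⟨Sym2.map σ e, ?_⟩
      induction e using Sym2.ind with
      | _ a b => simp [Sym2.map_pair_eq]
  refine ⟨fun e => hnn _, fun e he => hdiag _ ?_, ?_⟩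
  · induction e using Sym2.ind with
    | _ a b =>
      rw [Sym2.mk_isDiag_iff] at he
      subst he
      simp [Sym2.map_pair_eq]
  · rw [← hsum]
    exact Fintype.sum_bijective (Sym2.map ⇑σ.symm) hbij
      (fun e => μ (Sym2.map σ.symm e)) μ (fun e => rfl)

lemma beta_transport {n : ℕ} (σ : X ≃ Fin n) (μ : Sym2 X → ℝ) :
    beta (fun e => μ (Sym2.map σ.symm e)) m = beta μ m := by
  unfold beta
  congr 1
  refine (Fintype.sum_bijective (fun g : Fin m → X => ⇑σ ∘ g) ?_
    (fun g => if Function.Injective g then cycleWeight μ g else 0)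
    (fun h => if Function.Injective h then cycleWeight (fun e => μ (Sym2.map σ.symm e)) h else 0)
    ?_).symm
  · constructor
    · intro g g' h
      funext i
      exact σ.injective (congrFun h i)
    · intro h
      exact ⟨⇑σ.symm ∘ h, funext fun i => by simp⟩
  · intro g
    have hinj : Function.Injective g ↔ Function.Injective (⇑σ ∘ g) := by
      constructor
      · exact fun h => σ.injective.comp h
      · intro h a b hab
        exact h (by simp [Function.comp, hab])
    have hw : cycleWeight (fun e => μ (Sym2.map σ.symm e)) (⇑σ ∘ g) = cycleWeight μ g := by
      unfold cycleWeight
      refine Finset.prod_congr rfl fun i _ => ?_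
      simp [Sym2.map_pair_eq]
    by_cases h : Function.Injective g
    · rw [if_pos h, if_pos (hinj.1 h), hw]
    · rw [if_neg h, if_neg (fun hc => h (hinj.2 hc))]

lemma bddAbove_S (hm : 3 ≤ m) :
    BddAbove {b : ℝ | ∃ (n : ℕ) (ν : Sym2 (Fin n) → ℝ), IsProbMass ν ∧ b = beta ν m} := by
  refine ⟨2 ^ m, fun b hb => ?_⟩
  obtain ⟨n, ν, hν, rfl⟩ := hb
  rw [beta_eq_cycSum]
  calc cycSum ν m / (2 * m) ≤ cycSum ν m := by
        apply div_le_self (cycSum_nonneg hν.1)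
        have : (3:ℝ) ≤ (m:ℝ) := by exact_mod_cast hm
        linarith
    _ ≤ 2 ^ m := cycSum_le hν

lemma beta_le_betaSup (hm : 3 ≤ m) {μ : Sym2 X → ℝ} (hμ : IsProbMass μ) :
    beta μ m ≤ betaSup m := by
  have σ := Fintype.equivFin X
  rw [← beta_transport (m := m) σ μ]
  exact le_csSup (bddAbove_S hm) ⟨_, _, isProbMass_transport σ μ hμ, rfl⟩

lemma betaSup_pos (hm : 3 ≤ m) : 0 < betaSup m := by
  classical
  have hm3 : (3:ℝ) ≤ (m:ℝ) := by exact_mod_cast hm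
  have hm0 : (0:ℝ) < m := by linarith
  set ν : Sym2 (Fin m) → ℝ :=
    fun e => if ∃ i : Fin m, e = s(i, cnext i) then (m:ℝ)⁻¹ else 0 with hνdef
  have hinj : Function.Injective (fun i : Fin m => s(i, cnext i)) := by
    intro i j h
    by_contra hne
    exact edges_distinct hm Function.injective_id hne h
  have hprob : IsProbMass ν := by
    refine ⟨fun e => ?_, fun e he => ?_, ?_⟩
    · rw [hνdef]; dsimp only; split <;> positivity
    · rw [hνdef]; dsimp only
      rw [if_neg]
      rintro ⟨i, rfl⟩
      rw [Sym2.mk_isDiag_iff] at he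
      exact cnext_ne hm i he.symm
    · have hrw : ∀ e : Sym2 (Fin m), ν e =
          if e ∈ Finset.image (fun i : Fin m => s(i, cnext i)) univ then (m:ℝ)⁻¹ else 0 := by
        intro e
        rw [hνdef]; dsimp only
        congr 1
        simp only [Finset.mem_image, Finset.mem_univ, true_and, eq_iff_iff]
        constructor
        · rintro ⟨i, rfl⟩; exact ⟨i, rfl⟩
        · rintro ⟨i, rfl⟩; exact ⟨i, rfl⟩
      calc ∑ e : Sym2 (Fin m), ν e
          = ∑ e ∈ univ ∩ Finset.image (fun i : Fin m => s(i, cnext i)) univ, (m:ℝ)⁻¹ := by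
            rw [← Finset.sum_ite_mem]
            exact Finset.sum_congr rfl fun e _ => hrw e
        _ = 1 := by
            rw [Finset.univ_inter, Finset.sum_const,
              Finset.card_image_of_injective _ hinj, Finset.card_univ, Fintype.card_fin,
              nsmul_eq_mul, mul_inv_cancel₀ (by linarith)]
  have hterm : cycleWeight ν (id : Fin m → Fin m) = ((m:ℝ)⁻¹) ^ m := by
    unfold cycleWeight
    rw [Finset.prod_congr rfl (fun i _ => ?_), Finset.prod_const, Finset.card_univ,
      Fintype.card_fin]
    rw [hνdef]; dsimp only
    rw [if_pos ⟨i, rfl⟩]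
  have hpos : 0 < cycSum ν m := by
    have hle : ((m:ℝ)⁻¹) ^ m ≤ cycSum ν m := by
      have := Finset.single_le_sum
        (f := fun f : Fin m → Fin m => if Function.Injective f then cycleWeight ν f else 0)
        (fun f _ => by
          split
          · exact Finset.prod_nonneg fun _ _ => hprob.1 _
          · exact le_refl 0) (Finset.mem_univ (id : Fin m → Fin m))
      rw [if_pos Function.injective_id, hterm] at this
      exact this
    have : (0:ℝ) < ((m:ℝ)⁻¹) ^ m := by positivity
    linarith
  have hbpos : 0 < beta ν m := by
    rw [beta_eq_cycSum]
    positivity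
  exact lt_of_lt_of_le hbpos (le_csSup (bddAbove_S hm) ⟨m, ν, hprob, rfl⟩)

lemma cycSum_decomp (hm : 3 ≤ m) (μ : Sym2 X → ℝ) (e : Sym2 X) (u c : ℝ) :
    cycSum (fun e' => if e' = e then u else c * μ e') m
      = u * c ^ (m - 1) *
          (∑ f : Fin m → X,
            if Function.Injective f ∧ ∃ i, s(f i, f (cnext i)) = e
            then ∏ i, (if s(f i, f (cnext i)) = e then 1 else μ s(f i, f (cnext i))) else 0)
        + c ^ m *
          (∑ f : Fin m → X,
            if Function.Injective f ∧ ∀ i, s(f i, f (cnext i)) ≠ e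
            then cycleWeight μ f else 0) := by
  unfold cycSum
  rw [Finset.mul_sum, Finset.mul_sum, ← Finset.sum_add_distrib]
  refine Finset.sum_congr rfl fun f _ => ?_
  by_cases hf : Function.Injective f
  · by_cases hth : ∃ i, s(f i, f (cnext i)) = e
    · obtain ⟨i₀, hi₀⟩ := hth
      have huniq : ∀ j ∈ (univ : Finset (Fin m)).erase i₀, s(f j, f (cnext j)) ≠ e := by
        intro j hj
        exact fun h' => edges_distinct hm hf (Finset.ne_of_mem_erase hj)
          (h'.trans hi₀.symm)
      have hcard : ((univ : Finset (Fin m)).erase i₀).card = m - 1 := by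
        rw [Finset.card_erase_of_mem (Finset.mem_univ _), Finset.card_univ, Fintype.card_fin]
      have hlhs : cycleWeight (fun e' => if e' = e then u else c * μ e') f
          = u * (c ^ (m - 1) * ∏ i ∈ (univ : Finset (Fin m)).erase i₀,
              μ s(f i, f (cnext i))) := by
        unfold cycleWeight
        rw [← Finset.mul_prod_erase univ _ (Finset.mem_univ i₀)]
        dsimp only
        rw [if_pos hi₀]
        congr 1
        rw [Finset.prod_congr rfl (fun j hj => if_neg (huniq j hj)),
          Finset.prod_mul_distrib, Finset.prod_const, hcard]
      have hq : (∏ i, (if s(f i, f (cnext i)) = e then 1 else μ s(f i, f (cnext i))))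
          = ∏ i ∈ (univ : Finset (Fin m)).erase i₀, μ s(f i, f (cnext i)) := by
        rw [← Finset.mul_prod_erase univ _ (Finset.mem_univ i₀), if_pos hi₀, one_mul]
        exact Finset.prod_congr rfl fun j hj => if_neg (huniq j hj)
      rw [if_pos hf, if_pos ⟨hf, ⟨i₀, hi₀⟩⟩, if_neg (fun h => h.2 i₀ hi₀), hlhs, hq]
      ring
    · push_neg at hth
      have hlhs : cycleWeight (fun e' => if e' = e then u else c * μ e') f
          = c ^ m * cycleWeight μ f := by
        unfold cycleWeight
        rw [Finset.prod_congr rfl (fun j _ => if_neg (hth j)),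
          Finset.prod_mul_distrib, Finset.prod_const, Finset.card_univ, Fintype.card_fin]
      have hneg : ¬(Function.Injective f ∧ ∃ i, s(f i, f (cnext i)) = e) := by
        rintro ⟨-, i, hi⟩
        exact hth i hi
      rw [if_pos hf, if_neg hneg, if_pos ⟨hf, hth⟩, hlhs]
      ring
  · rw [if_neg hf, if_neg (fun h => hf h.1), if_neg (fun h => hf h.1)]
    ring

end AuxB

lemma poly_max_identity (m : ℕ) (hm : 3 ≤ m) {A B x : ℝ}
    (hx0 : 0 < x) (hx1 : x < 1)
    (hmax : ∀ u ∈ Set.Icc (0:ℝ) 1,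
      u * (1-u)^(m-1) * A + (1-u)^m * B ≤ x * (1-x)^(m-1) * A + (1-x)^m * B) :
    A * (1 - m * x) = m * B * (1 - x) := by
  set g : ℝ → ℝ := fun u => u * (1-u)^(m-1) * A + (1-u)^m * B with hg
  have hloc : IsLocalMax g x :=
    (isMaxOn_iff.2 hmax).isLocalMax (Icc_mem_nhds hx0 hx1)
  have h1 : HasDerivAt (fun u : ℝ => 1 - u) (-1) x := (hasDerivAt_id x).const_sub 1
  have hder : HasDerivAt g
      ((1 * (1-x)^(m-1) + x * (((m-1 : ℕ) : ℝ) * (1-x)^(m-1-1) * (-1))) * A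
        + (((m : ℕ) : ℝ) * (1-x)^(m-1) * (-1)) * B) x := by
    exact (((hasDerivAt_id x).mul (h1.pow (m-1))).mul_const A).add ((h1.pow m).mul_const B)
  have h0 : (1 * (1-x)^(m-1) + x * (((m-1 : ℕ) : ℝ) * (1-x)^(m-1-1) * (-1))) * A
        + (((m : ℕ) : ℝ) * (1-x)^(m-1) * (-1)) * B = 0 := by
    rw [← hder.deriv]; exact hloc.deriv_eq_zero
  have hcast : ((m-1 : ℕ) : ℝ) = (m : ℝ) - 1 := by
    have h1m : 1 ≤ m := by omega
    rw [Nat.cast_sub h1m, Nat.cast_one]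
  have hp2 : (1-x)^(m-1-1) = (1-x)^(m-2) := by congr 1
  have hp1 : (1-x)^(m-1) = (1-x)^(m-2) * (1-x) := by
    rw [← pow_succ]; congr 1; omega
  rw [hcast, hp2, hp1] at h0
  have key : (1-x)^(m-2) * (A * (1 - (m:ℝ) * x) - (m:ℝ) * B * (1-x)) = 0 := by
    linear_combination h0
  have hPne : (1-x)^(m-2) ≠ 0 := pow_ne_zero _ (by linarith)
  rcases mul_eq_zero.1 key with h | h
  · exact absurd h hPne
  · linarith

/-- For `m ≥ 3` and `μ ∈ Opt(m)`: any edge `e ∈ supp μ` satisfies `μ(e) ≤ 1/m`, with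
equality iff `e` belongs to every unlabeled `m`-cycle of the support graph `G_μ`. -/
theorem edge_upperbound (m : ℕ) (hm : 3 ≤ m) {X : Type*} [Fintype X] [DecidableEq X]
    (μ : Sym2 X → ℝ) (hμ : IsProbMass μ) (hopt : beta μ m = betaSup m)
    (e : Sym2 X) (he : 0 < μ e) :
    μ e ≤ 1 / m ∧
      (μ e = 1 / m ↔ ∀ f : Fin m → X, Function.Injective f →
        (∀ i, 0 < μ s(f i, f (cnext i))) → ∃ i, s(f i, f (cnext i)) = e) := by
  classical
  obtain ⟨hnn, hdiag, hsum⟩ := hμ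
  have hμ' : IsProbMass μ := ⟨hnn, hdiag, hsum⟩
  have hm3 : (3:ℝ) ≤ (m:ℝ) := by exact_mod_cast hm
  have hmpos : (0:ℝ) < m := by linarith
  have h2m : (0:ℝ) < 2 * m := by linarith
  have hsup : 0 < betaSup m := betaSup_pos hm
  have hle1 : μ e ≤ 1 := by
    rw [← hsum]
    exact Finset.single_le_sum (fun e' _ => hnn e') (Finset.mem_univ e)
  -- index 0 and 1 of Fin m
  have h01 : (⟨0, by omega⟩ : Fin m) ≠ ⟨1, by omega⟩ := by
    intro h
    exact absurd (congrArg Fin.val h) (by norm_num)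
  have hlt1 : μ e < 1 := by
    rcases lt_or_eq_of_le hle1 with h | h
    · exact h
    · exfalso
      have hzsum : ∑ e' ∈ univ.erase e, μ e' = 0 := by
        have hae := Finset.add_sum_erase univ μ (Finset.mem_univ e)
        rw [hsum, ← h] at hae
        linarith
      have hzero : ∀ e', e' ≠ e → μ e' = 0 := fun e' hne =>
        (Finset.sum_eq_zero_iff_of_nonneg (fun x _ => hnn x)).1 hzsum e'
          (Finset.mem_erase.2 ⟨hne, Finset.mem_univ _⟩)
      have hcyc : cycSum μ m = 0 := by
        apply Finset.sum_eq_zero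
        intro f _
        by_cases hf : Function.Injective f
        · rw [if_pos hf]
          have hex : ∃ i, s(f i, f (cnext i)) ≠ e := by
            by_contra hno
            push_neg at hno
            exact edges_distinct hm hf h01
              ((hno ⟨0, by omega⟩).trans (hno ⟨1, by omega⟩).symm)
          obtain ⟨i, hi⟩ := hex
          exact Finset.prod_eq_zero (Finset.mem_univ i) (hzero _ hi)
        · rw [if_neg hf]
      have : beta μ m = 0 := by rw [beta_eq_cycSum, hcyc, zero_div]
      rw [hopt] at this
      linarith
  have hD : (0:ℝ) < 1 - μ e := by linarith
  -- decomposition constants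
  have hdec := fun u c => cycSum_decomp hm μ e u c
  set A := (∑ f : Fin m → X,
      if Function.Injective f ∧ ∃ i, s(f i, f (cnext i)) = e
      then ∏ i, (if s(f i, f (cnext i)) = e then 1 else μ s(f i, f (cnext i))) else 0)
    with hAdef
  set B := (∑ f : Fin m → X,
      if Function.Injective f ∧ ∀ i, s(f i, f (cnext i)) ≠ e
      then cycleWeight μ f else 0) with hBdef
  have hA0 : 0 ≤ A := by
    rw [hAdef]
    refine Finset.sum_nonneg fun f _ => ?_
    split
    · refine Finset.prod_nonneg fun i _ => ?_
      split
      · norm_num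
      · exact hnn _
    · exact le_refl 0
  have hB0 : 0 ≤ B := by
    rw [hBdef]
    refine Finset.sum_nonneg fun f _ => ?_
    split
    · exact Finset.prod_nonneg fun i _ => hnn _
    · exact le_refl 0
  -- cycSum μ m = μ e * A + B
  have hid : (fun e' => if e' = e then μ e else (1:ℝ) * μ e') = μ := by
    funext e'
    by_cases h : e' = e
    · rw [if_pos h, h]
    · rw [if_neg h, one_mul]
  have hcycμ : cycSum μ m = μ e * A + B := by
    have h0 := hdec (μ e) 1
    rw [hid, one_pow, one_pow, mul_one, one_mul] at h0
    exact h0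
  -- the perturbed masses are probability masses
  have hprob : ∀ u ∈ Set.Icc (0:ℝ) 1,
      IsProbMass (fun e' => if e' = e then u else ((1 - μ e)⁻¹ * (1-u)) * μ e') := by
    rintro u ⟨hu0, hu1⟩
    have hc0 : 0 ≤ (1 - μ e)⁻¹ * (1-u) := by
      apply mul_nonneg (le_of_lt (inv_pos.2 hD))
      linarith
    refine ⟨fun e' => ?_, fun e' he' => ?_, ?_⟩
    · dsimp only
      split
      · exact hu0
      · exact mul_nonneg hc0 (hnn _)
    · dsimp only
      have hne : e' ≠ e := by
        intro hc
        rw [hc] at he'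
        have := hdiag e he'
        linarith
      rw [if_neg hne, hdiag e' he', mul_zero]
    · have hsplit : ∀ e' : Sym2 X,
          (if e' = e then u else ((1 - μ e)⁻¹ * (1-u)) * μ e')
            = ((1 - μ e)⁻¹ * (1-u)) * μ e'
              + (if e' = e then u - ((1 - μ e)⁻¹ * (1-u)) * μ e else 0) := by
        intro e'
        by_cases h : e' = e
        · rw [if_pos h, if_pos h, h]; ring
        · rw [if_neg h, if_neg h]; ring
      rw [Finset.sum_congr rfl (fun e' _ => hsplit e'), Finset.sum_add_distrib,
        ← Finset.mul_sum, hsum, Finset.sum_ite_eq' univ e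
          (fun _ => u - ((1 - μ e)⁻¹ * (1-u)) * μ e), if_pos (Finset.mem_univ e)]
      field_simp
      ring
  -- the optimality inequality, rescaled
  have hopt' : ∀ u ∈ Set.Icc (0:ℝ) 1,
      u * (1-u)^(m-1) * ((1 - μ e) * A) + (1-u)^m * B
        ≤ μ e * (1 - μ e)^(m-1) * ((1 - μ e) * A) + (1 - μ e)^m * B := by
    intro u hu
    have hbeta : beta (fun e' => if e' = e then u else ((1 - μ e)⁻¹ * (1-u)) * μ e') m
        ≤ beta μ m := by
      rw [hopt]
      exact beta_le_betaSup hm (hprob u hu)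
    rw [beta_eq_cycSum, beta_eq_cycSum] at hbeta
    have hcs : cycSum (fun e' => if e' = e then u else ((1 - μ e)⁻¹ * (1-u)) * μ e') m
        ≤ cycSum μ m := by
      have := mul_le_mul_of_nonneg_right hbeta (le_of_lt h2m)
      rwa [div_mul_cancel₀ _ (ne_of_gt h2m), div_mul_cancel₀ _ (ne_of_gt h2m)] at this
    rw [hdec u ((1 - μ e)⁻¹ * (1-u)), hcycμ] at hcs
    -- multiply by (1 - μ e)^m
    have hDm : (1 - μ e)^m = (1 - μ e)^(m-1) * (1 - μ e) := by
      rw [← pow_succ]; congr 1; omega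
    have hmul := mul_le_mul_of_nonneg_left hcs (le_of_lt (pow_pos hD m))
    have hl : (1 - μ e)^m * (u * ((1 - μ e)⁻¹ * (1-u)) ^ (m-1) * A
          + ((1 - μ e)⁻¹ * (1-u)) ^ m * B)
        = u * (1-u)^(m-1) * ((1 - μ e) * A) + (1-u)^m * B := by
      rw [mul_pow, mul_pow, inv_pow, inv_pow, hDm]
      have hne1 : (1 - μ e)^(m-1) ≠ 0 := pow_ne_zero _ (ne_of_gt hD)
      field_simp
    have hr : (1 - μ e)^m * (μ e * A + B)
        = μ e * (1 - μ e)^(m-1) * ((1 - μ e) * A) + (1 - μ e)^m * B := by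
      rw [hDm]; ring
    rw [hl, hr] at hmul
    exact hmul
  -- the key identity from vanishing derivative at the interior maximum
  have hkey : ((1 - μ e) * A) * (1 - m * μ e) = m * B * (1 - μ e) :=
    poly_max_identity m hm he hlt1 hopt'
  -- A is positive
  have hApos : 0 < (1 - μ e) * A := by
    rcases lt_or_eq_of_le (mul_nonneg (le_of_lt hD) hA0) with h | h
    · exact h
    · exfalso
      have hBz : B = 0 := by
        have h' : m * B * (1 - μ e) = 0 := by rw [← hkey, ← h]; ring
        rcases mul_eq_zero.1 h' with h'' | h''
        · rcases mul_eq_zero.1 h'' with h3 | h3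
          · exact absurd h3 (ne_of_gt hmpos)
          · exact h3
        · exact absurd h'' (ne_of_gt hD)
      have hAz : A = 0 := by
        rcases mul_eq_zero.1 h.symm with h'' | h''
        · exact absurd h'' (ne_of_gt hD)
        · exact h''
      have : beta μ m = 0 := by
        rw [beta_eq_cycSum, hcycμ, hAz, hBz, mul_zero, add_zero, zero_div]
      rw [hopt] at this
      linarith
  -- part 1 : μ e ≤ 1/m
  have hpart1 : μ e ≤ 1 / m := by
    have hnn1 : 0 ≤ 1 - (m:ℝ) * μ e := by
      by_contra hcon
      push_neg at hcon
      have h1 : ((1 - μ e) * A) * (1 - m * μ e) < 0 :=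
        mul_neg_of_pos_of_neg hApos hcon
      have h2 : 0 ≤ m * B * (1 - μ e) := by positivity
      linarith [hkey]
    rw [le_div_iff₀ hmpos]
    linarith
  refine ⟨hpart1, ?_⟩
  -- part 2 : equality iff B = 0 iff every positive cycle passes through e
  have hBiff : B = 0 ↔ ∀ f : Fin m → X, Function.Injective f →
      (∀ i, 0 < μ s(f i, f (cnext i))) → ∃ i, s(f i, f (cnext i)) = e := by
    rw [hBdef, Finset.sum_eq_zero_iff_of_nonneg (fun f _ => by
      split
      · exact Finset.prod_nonneg fun i _ => hnn _
      · exact le_refl 0)]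
    constructor
    · intro h f hf hpos
      by_contra hno
      push_neg at hno
      have hzero := h f (Finset.mem_univ f)
      rw [if_pos ⟨hf, hno⟩] at hzero
      have : 0 < cycleWeight μ f := Finset.prod_pos fun i _ => hpos i
      linarith
    · intro h f _
      by_cases hc : Function.Injective f ∧ ∀ i, s(f i, f (cnext i)) ≠ e
      · rw [if_pos hc]
        have hnotall : ¬ ∀ i, 0 < μ s(f i, f (cnext i)) := by
          intro hp
          obtain ⟨i, hi⟩ := h f hc.1 hp
          exact hc.2 i hi
        push_neg at hnotall
        obtain ⟨i, hi⟩ := hnotall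
        exact Finset.prod_eq_zero (Finset.mem_univ i) (le_antisymm hi (hnn _))
      · rw [if_neg hc]
  rw [← hBiff]
  constructor
  · intro heq
    have hz : 1 - (m:ℝ) * μ e = 0 := by
      rw [heq]
      field_simp
      norm_num
    have : m * B * (1 - μ e) = 0 := by rw [← hkey, hz, mul_zero]
    rcases mul_eq_zero.1 this with h'' | h''
    · rcases mul_eq_zero.1 h'' with h3 | h3
      · exact absurd h3 (ne_of_gt hmpos)
      · exact h3
    · exact absurd h'' (ne_of_gt hD)
  · intro hBz
    have : ((1 - μ e) * A) * (1 - m * μ e) = 0 := by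
      rw [hkey, hBz]; ring
    rcases mul_eq_zero.1 this with h'' | h''
    · exact absurd h'' (ne_of_gt hApos)
    · field_simp
      linarith
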